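/- arXiv:2601.03516 — 4 statements merged into one kernel-verified Lean document; each statement's English description precedes it below -/
import Mathlib

section
/- Let S be a finite set of points in ℝ², let ε > 0, and let Q ⊆ S be an ε-certificate of S. Let (σ₁, σ₂) be a pair of slabs of equal width w covering Q that minimizes w among all equal-width slab pairs covering Q, and let w* be the minimum, over all slab pairs covering S, of the maximum of the two widths. Then the ε-expansions (σ₁', σ₂') of (σ₁, σ₂) cover S and satisfy w(σ₁') = w(σ₂') ≤ (1+ε)·w*. -/
/-- A slab with unit normal `u`, bounded by the lines `⟪u,x⟫ = a` and `⟪u,x⟫ = b`. -/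
def slab (u : EuclideanSpace ℝ (Fin 2)) (a b : ℝ) : Set (EuclideanSpace ℝ (Fin 2)) :=
  {x | (inner ℝ u x : ℝ) ∈ Set.Icc a b}

/-- Given an ε-certificate `Q` of `S` and an optimal equal-width slab pair for `Q`,
the ε-expansions cover `S` and have width at most `(1+ε)·w*`. -/
theorem stmt9 (S : Finset (EuclideanSpace ℝ (Fin 2))) (ε : ℝ) (hε : 0 < ε)
    (Q : Set (EuclideanSpace ℝ (Fin 2))) (hQS : Q ⊆ ↑S)
    (hcert : ∀ (u₁ : EuclideanSpace ℝ (Fin 2)) (a₁ b₁ : ℝ)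
        (u₂ : EuclideanSpace ℝ (Fin 2)) (a₂ b₂ : ℝ),
      ‖u₁‖ = 1 → ‖u₂‖ = 1 → b₁ - a₁ = b₂ - a₂ →
      Q ⊆ slab u₁ a₁ b₁ ∪ slab u₂ a₂ b₂ →
      (↑S : Set (EuclideanSpace ℝ (Fin 2))) ⊆
        slab u₁ (a₁ - ε * (b₁ - a₁) / 2) (b₁ + ε * (b₁ - a₁) / 2) ∪
        slab u₂ (a₂ - ε * (b₂ - a₂) / 2) (b₂ + ε * (b₂ - a₂) / 2))
    (u₁ : EuclideanSpace ℝ (Fin 2)) (a₁ b₁ : ℝ)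
    (u₂ : EuclideanSpace ℝ (Fin 2)) (a₂ b₂ : ℝ)
    (hu₁ : ‖u₁‖ = 1) (hu₂ : ‖u₂‖ = 1) (hab : a₁ ≤ b₁)
    (heq : b₁ - a₁ = b₂ - a₂)
    (hcovQ : Q ⊆ slab u₁ a₁ b₁ ∪ slab u₂ a₂ b₂)
    (hmin : ∀ (v₁ : EuclideanSpace ℝ (Fin 2)) (c₁ e₁ : ℝ)
        (v₂ : EuclideanSpace ℝ (Fin 2)) (c₂ e₂ : ℝ),
      ‖v₁‖ = 1 → ‖v₂‖ = 1 → e₁ - c₁ = e₂ - c₂ →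
      Q ⊆ slab v₁ c₁ e₁ ∪ slab v₂ c₂ e₂ → b₁ - a₁ ≤ e₁ - c₁)
    (wstar : ℝ)
    (hwstar : IsLeast {w : ℝ | ∃ (v₁ : EuclideanSpace ℝ (Fin 2)) (c₁ e₁ : ℝ)
        (v₂ : EuclideanSpace ℝ (Fin 2)) (c₂ e₂ : ℝ),
      ‖v₁‖ = 1 ∧ ‖v₂‖ = 1 ∧
      (↑S : Set (EuclideanSpace ℝ (Fin 2))) ⊆ slab v₁ c₁ e₁ ∪ slab v₂ c₂ e₂ ∧
      w = max (e₁ - c₁) (e₂ - c₂)} wstar) :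
    (↑S : Set (EuclideanSpace ℝ (Fin 2))) ⊆
      slab u₁ (a₁ - ε * (b₁ - a₁) / 2) (b₁ + ε * (b₁ - a₁) / 2) ∪
      slab u₂ (a₂ - ε * (b₂ - a₂) / 2) (b₂ + ε * (b₂ - a₂) / 2) ∧
    (1 + ε) * (b₁ - a₁) ≤ (1 + ε) * wstar := by
  refine ⟨hcert u₁ a₁ b₁ u₂ a₂ b₂ hu₁ hu₂ heq hcovQ, ?_⟩
  have h1ε : (0:ℝ) < 1 + ε := by linarith
  refine mul_le_mul_of_nonneg_left ?_ h1ε.le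
  obtain ⟨⟨v₁, c₁, e₁, v₂, c₂, e₂, hv₁, hv₂, hcov, hw⟩, _⟩ := hwstar
  have h1 : e₁ - c₁ ≤ wstar := hw ▸ le_max_left _ _
  have h2 : e₂ - c₂ ≤ wstar := hw ▸ le_max_right _ _
  have hsub : Q ⊆ slab v₁ c₁ (c₁ + wstar) ∪ slab v₂ c₂ (c₂ + wstar) := by
    intro x hx
    rcases hcov (hQS hx) with h | h
    · exact Or.inl ⟨h.1, h.2.trans (by linarith)⟩
    · exact Or.inr ⟨h.1, h.2.trans (by linarith)⟩
  have := hmin v₁ c₁ (c₁ + wstar) v₂ c₂ (c₂ + wstar) hv₁ hv₂ (by ring) hsub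
  linarith
end

section
/- Let S be a finite set of points in ℝ² not all on one horizontal line and not all on one line of orientation θ. Let p_t, p_b be a highest and a lowest point of S, and p_ℓ, p_r the two extreme points of S in the direction orthogonal to θ. Suppose (σ_h, σ_t) is a pair of slabs covering S, with σ_h horizontal and σ_t of orientation θ, minimizing the maximum width w*. Then there exists an optimal pair (σ_h*, σ_t*) and two distinct points p, q ∈ {p_b, p_t, p_ℓ, p_r} with p ∈ σ_h* and q ∈ σ_t*. -/
/-- Unit normal of a slab of orientation `γ` (whose bounding lines make angle `γ`
with the x-axis). In particular `dir 0 = (0,1)` is the normal of a horizontal slab. -/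
noncomputable def dir (γ : ℝ) : EuclideanSpace ℝ (Fin 2) :=
  (EuclideanSpace.equiv (Fin 2) ℝ).symm ![-(Real.sin γ), Real.cos γ]

/-- For the two-fixed-orientations problem (orientations `0` and `θ`), there exists an
optimal pair of slabs such that two distinct points among the four extreme points
`p_b, p_t, p_ℓ, p_r` lie one in the horizontal slab and one in the slab of
orientation `θ`. -/
theorem stmt12 (S : Finset (EuclideanSpace ℝ (Fin 2))) (θ : ℝ)
    (hθ0 : 0 < θ) (hθ1 : θ < Real.pi)
    (hnotH : ¬ ∃ c : ℝ, ∀ x ∈ S, (inner ℝ (dir 0) x : ℝ) = c)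
    (hnotT : ¬ ∃ c : ℝ, ∀ x ∈ S, (inner ℝ (dir θ) x : ℝ) = c)
    (pt pb pl pr : EuclideanSpace ℝ (Fin 2))
    (hpt : pt ∈ S ∧ ∀ x ∈ S, (inner ℝ (dir 0) x : ℝ) ≤ inner ℝ (dir 0) pt)
    (hpb : pb ∈ S ∧ ∀ x ∈ S, (inner ℝ (dir 0) pb : ℝ) ≤ inner ℝ (dir 0) x)
    (hpr : pr ∈ S ∧ ∀ x ∈ S, (inner ℝ (dir θ) x : ℝ) ≤ inner ℝ (dir θ) pr)
    (hpl : pl ∈ S ∧ ∀ x ∈ S, (inner ℝ (dir θ) pl : ℝ) ≤ inner ℝ (dir θ) x)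
    (wstar : ℝ)
    (hwstar : IsLeast {w : ℝ | ∃ a₁ b₁ a₂ b₂ : ℝ, a₁ ≤ b₁ ∧ a₂ ≤ b₂ ∧
      (↑S : Set (EuclideanSpace ℝ (Fin 2))) ⊆ slab (dir 0) a₁ b₁ ∪ slab (dir θ) a₂ b₂ ∧
      w = max (b₁ - a₁) (b₂ - a₂)} wstar) :
    ∃ a₁ b₁ a₂ b₂ : ℝ, a₁ ≤ b₁ ∧ a₂ ≤ b₂ ∧
      (↑S : Set (EuclideanSpace ℝ (Fin 2))) ⊆ slab (dir 0) a₁ b₁ ∪ slab (dir θ) a₂ b₂ ∧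
      max (b₁ - a₁) (b₂ - a₂) = wstar ∧
      ∃ p ∈ ({pb, pt, pl, pr} : Set (EuclideanSpace ℝ (Fin 2))),
        ∃ q ∈ ({pb, pt, pl, pr} : Set (EuclideanSpace ℝ (Fin 2))),
          p ≠ q ∧ p ∈ slab (dir 0) a₁ b₁ ∧ q ∈ slab (dir θ) a₂ b₂ := by
  obtain ⟨hmem, hlb⟩ := hwstar
  obtain ⟨a₁, b₁, a₂, b₂, h1, h2, hcov, heq⟩ := hmem
  obtain ⟨hptS, hptmax⟩ := hpt
  obtain ⟨hpbS, hpbmin⟩ := hpb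
  obtain ⟨hprS, hprmax⟩ := hpr
  obtain ⟨hplS, hplmin⟩ := hpl
  have hsl : ∀ (u : EuclideanSpace ℝ (Fin 2)) (a b : ℝ) x,
      x ∈ slab u a b ↔ a ≤ (inner ℝ u x : ℝ) ∧ (inner ℝ u x : ℝ) ≤ b := by
    intro u a b x; simp [slab]
  have hbt : pb ≠ pt := by
    intro h
    exact hnotH ⟨inner ℝ (dir 0) pb, fun x hx =>
      le_antisymm (by rw [h]; exact hptmax x hx) (hpbmin x hx)⟩
  have hlr : pl ≠ pr := by
    intro h
    exact hnotT ⟨inner ℝ (dir θ) pl, fun x hx =>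
      le_antisymm (by rw [h]; exact hprmax x hx) (hplmin x hx)⟩
  by_cases hH : pb ∈ slab (dir 0) a₁ b₁ ∧ pt ∈ slab (dir 0) a₁ b₁
  · -- horizontal slab covers all of S
    obtain ⟨hb0, ht0⟩ := hH
    have hcovH : ∀ x ∈ S, x ∈ slab (dir 0) a₁ b₁ := by
      intro x hx
      rw [hsl]
      exact ⟨le_trans ((hsl _ _ _ _).1 hb0).1 (hpbmin x hx),
             le_trans (hptmax x hx) ((hsl _ _ _ _).1 ht0).2⟩
    have hle : wstar ≤ b₁ - a₁ := by
      apply hlb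
      refine ⟨a₁, b₁, 0, 0, h1, le_refl _, fun x hx => Or.inl (hcovH x hx), ?_⟩
      rw [max_eq_left (by linarith)]
    have hge : b₁ - a₁ ≤ wstar := by rw [heq]; exact le_max_left _ _
    refine ⟨a₁, b₁, inner ℝ (dir θ) pl, inner ℝ (dir θ) pl, h1, le_refl _,
      fun x hx => Or.inl (hcovH x hx), ?_, ?_⟩
    · rw [max_eq_left (by linarith)]; linarith
    · by_cases hpp : pb = pl
      · exact ⟨pt, by simp, pl, by simp, by rw [← hpp]; exact hbt.symm,
          ht0, (hsl _ _ _ _).2 ⟨le_refl _, le_refl _⟩⟩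
      · exact ⟨pb, by simp, pl, by simp, hpp,
          hb0, (hsl _ _ _ _).2 ⟨le_refl _, le_refl _⟩⟩
  · by_cases hT : pl ∈ slab (dir θ) a₂ b₂ ∧ pr ∈ slab (dir θ) a₂ b₂
    · -- θ-slab covers all of S
      obtain ⟨hl0, hr0⟩ := hT
      have hcovT : ∀ x ∈ S, x ∈ slab (dir θ) a₂ b₂ := by
        intro x hx
        rw [hsl]
        exact ⟨le_trans ((hsl _ _ _ _).1 hl0).1 (hplmin x hx),
               le_trans (hprmax x hx) ((hsl _ _ _ _).1 hr0).2⟩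
      have hle : wstar ≤ b₂ - a₂ := by
        apply hlb
        refine ⟨0, 0, a₂, b₂, le_refl _, h2, fun x hx => Or.inr (hcovT x hx), ?_⟩
        rw [max_eq_right (by linarith)]
      have hge : b₂ - a₂ ≤ wstar := by rw [heq]; exact le_max_right _ _
      refine ⟨inner ℝ (dir 0) pb, inner ℝ (dir 0) pb, a₂, b₂, le_refl _, h2,
        fun x hx => Or.inr (hcovT x hx), ?_, ?_⟩
      · rw [max_eq_right (by linarith)]; linarith
      · by_cases hpp : pb = pl
        · exact ⟨pb, by simp, pr, by simp, by rw [hpp]; exact hlr,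
            (hsl _ _ _ _).2 ⟨le_refl _, le_refl _⟩, hr0⟩
        · exact ⟨pb, by simp, pl, by simp, hpp,
            (hsl _ _ _ _).2 ⟨le_refl _, le_refl _⟩, hl0⟩
    · -- mixed case
      push_neg at hH hT
      -- some point among pb, pt is not in the horizontal slab, hence in the θ-slab
      have hx : ∃ x, (x = pb ∨ x = pt) ∧ x ∉ slab (dir 0) a₁ b₁ ∧ x ∈ slab (dir θ) a₂ b₂ := by
        by_cases hb0 : pb ∈ slab (dir 0) a₁ b₁
        · have h' : pt ∉ slab (dir 0) a₁ b₁ := hH hb0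
          refine ⟨pt, Or.inr rfl, h', ?_⟩
          rcases hcov (Finset.mem_coe.2 hptS) with h | h
          · exact absurd h h'
          · exact h
        · refine ⟨pb, Or.inl rfl, hb0, ?_⟩
          rcases hcov (Finset.mem_coe.2 hpbS) with h | h
          · exact absurd h hb0
          · exact h
      have hy : ∃ y, (y = pl ∨ y = pr) ∧ y ∉ slab (dir θ) a₂ b₂ ∧ y ∈ slab (dir 0) a₁ b₁ := by
        by_cases hl0 : pl ∈ slab (dir θ) a₂ b₂
        · have h' : pr ∉ slab (dir θ) a₂ b₂ := hT hl0
          refine ⟨pr, Or.inr rfl, h', ?_⟩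
          rcases hcov (Finset.mem_coe.2 hprS) with h | h
          · exact h
          · exact absurd h h'
        · refine ⟨pl, Or.inl rfl, hl0, ?_⟩
          rcases hcov (Finset.mem_coe.2 hplS) with h | h
          · exact h
          · exact absurd h hl0
      obtain ⟨x, hx4, hxn, hxT⟩ := hx
      obtain ⟨y, hy4, hyn, hyH⟩ := hy
      refine ⟨a₁, b₁, a₂, b₂, h1, h2, hcov, heq.symm, y, ?_, x, ?_, ?_, hyH, hxT⟩
      · rcases hy4 with h | h <;> simp [h]
      · rcases hx4 with h | h <;> simp [h]
      · intro h; exact hyn (h ▸ hxT)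
end

section
/- Let ℓ_h and ℓ_t be two lines in ℝ² and suppose ℓ_h ⊆ σ_h* and ℓ_t ⊆ σ_t* for slabs σ_h*, σ_t* with widths at most w* that together cover a finite point set S, where σ_h* is parallel to ℓ_h and σ_t* is parallel to ℓ_t. Partition S into H = {p ∈ S : d(p, ℓ_h) < d(p, ℓ_t)} and T = S \ H. Then every p ∈ H satisfies d(p, ℓ_h) ≤ w*, and every p ∈ T satisfies d(p, ℓ_t) ≤ w*. Consequently the minimum slab parallel to ℓ_h enclosing H has width at most 2w*, and the minimum slab parallel to ℓ_t enclosing T has width at most 2w*. -/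
/-- A line with unit normal `u` at offset `c`. -/
def line (u : EuclideanSpace ℝ (Fin 2)) (c : ℝ) : Set (EuclideanSpace ℝ (Fin 2)) :=
  {x | (inner ℝ u x : ℝ) = c}

lemma mem_line (u : EuclideanSpace ℝ (Fin 2)) (hu : ‖u‖ = 1) (c : ℝ) :
    c • u ∈ line u c := by
  simp only [line, Set.mem_setOf_eq, inner_smul_right, real_inner_self_eq_norm_sq, hu]
  ring

lemma infDist_line (u : EuclideanSpace ℝ (Fin 2)) (hu : ‖u‖ = 1) (c : ℝ)
    (p : EuclideanSpace ℝ (Fin 2)) :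
    Metric.infDist p (line u c) = |(inner ℝ u p : ℝ) - c| := by
  apply le_antisymm
  · have hq : p - ((inner ℝ u p : ℝ) - c) • u ∈ line u c := by
      simp only [line, Set.mem_setOf_eq, inner_sub_right, inner_smul_right,
        real_inner_self_eq_norm_sq, hu]
      ring
    calc Metric.infDist p (line u c) ≤ dist p (p - ((inner ℝ u p : ℝ) - c) • u) :=
          Metric.infDist_le_dist_of_mem hq
      _ = |(inner ℝ u p : ℝ) - c| := by
          rw [dist_eq_norm, sub_sub_cancel, norm_smul, hu, mul_one, Real.norm_eq_abs]
  · by_contra h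
    push_neg at h
    obtain ⟨y, hy, hd⟩ := (Metric.infDist_lt_iff ⟨c • u, mem_line u hu c⟩).1 h
    have heq : (inner ℝ u p : ℝ) - c = inner ℝ u (p - y) := by
      rw [inner_sub_right, hy]
    have : |(inner ℝ u p : ℝ) - c| ≤ dist p y := by
      rw [heq]
      calc |(inner ℝ u (p - y) : ℝ)| ≤ ‖u‖ * ‖p - y‖ := abs_real_inner_le_norm u (p - y)
        _ = dist p y := by rw [hu, one_mul, dist_eq_norm]
    linarith

/-- Greedy assignment: each point of `S` assigned to the nearer of the two lines is
within distance `w*` of it, so each group fits in a slab of width `2·w*` parallel to its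
line. -/
theorem stmt13 (S : Finset (EuclideanSpace ℝ (Fin 2)))
    (u v : EuclideanSpace ℝ (Fin 2)) (hu : ‖u‖ = 1) (hv : ‖v‖ = 1)
    (ch ct a₁ b₁ a₂ b₂ wstar : ℝ)
    (hwh : b₁ - a₁ ≤ wstar) (hwt : b₂ - a₂ ≤ wstar)
    (hlh : line u ch ⊆ slab u a₁ b₁) (hlt : line v ct ⊆ slab v a₂ b₂)
    (hcover : ↑S ⊆ slab u a₁ b₁ ∪ slab v a₂ b₂) :
    (∀ p ∈ S, Metric.infDist p (line u ch) < Metric.infDist p (line v ct) →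
        Metric.infDist p (line u ch) ≤ wstar) ∧
    (∀ p ∈ S, ¬ (Metric.infDist p (line u ch) < Metric.infDist p (line v ct)) →
        Metric.infDist p (line v ct) ≤ wstar) ∧
    (∃ a b : ℝ, b - a ≤ 2 * wstar ∧
      {p : EuclideanSpace ℝ (Fin 2) | p ∈ S ∧
          Metric.infDist p (line u ch) < Metric.infDist p (line v ct)} ⊆ slab u a b) ∧
    (∃ a b : ℝ, b - a ≤ 2 * wstar ∧
      {p : EuclideanSpace ℝ (Fin 2) | p ∈ S ∧
          ¬ (Metric.infDist p (line u ch) < Metric.infDist p (line v ct))} ⊆ slab v a b) := by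
  have hch : ch ∈ Set.Icc a₁ b₁ := by
    have := hlh (mem_line u hu ch)
    simpa only [slab, Set.mem_setOf_eq, inner_smul_right, real_inner_self_eq_norm_sq, hu,
      one_pow, mul_one] using this
  have hct : ct ∈ Set.Icc a₂ b₂ := by
    have := hlt (mem_line v hv ct)
    simpa only [slab, Set.mem_setOf_eq, inner_smul_right, real_inner_self_eq_norm_sq, hv,
      one_pow, mul_one] using this
  -- if p in slab u a₁ b₁ then dist to line u ch ≤ wstar
  have key₁ : ∀ p ∈ slab u a₁ b₁, Metric.infDist p (line u ch) ≤ wstar := by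
    intro p hp
    rw [infDist_line u hu]
    rw [slab, Set.mem_setOf_eq] at hp
    rw [abs_sub_le_iff]
    constructor <;> [linarith [hp.2, hch.1]; linarith [hp.1, hch.2]]
  have key₂ : ∀ p ∈ slab v a₂ b₂, Metric.infDist p (line v ct) ≤ wstar := by
    intro p hp
    rw [infDist_line v hv]
    rw [slab, Set.mem_setOf_eq] at hp
    rw [abs_sub_le_iff]
    constructor <;> [linarith [hp.2, hct.1]; linarith [hp.1, hct.2]]
  have H1 : ∀ p ∈ S, Metric.infDist p (line u ch) < Metric.infDist p (line v ct) →
      Metric.infDist p (line u ch) ≤ wstar := by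
    intro p hp hlt'
    rcases hcover hp with h | h
    · exact key₁ p h
    · exact le_of_lt (lt_of_lt_of_le hlt' (key₂ p h))
  have H2 : ∀ p ∈ S, ¬ (Metric.infDist p (line u ch) < Metric.infDist p (line v ct)) →
      Metric.infDist p (line v ct) ≤ wstar := by
    intro p hp hnlt
    rcases hcover hp with h | h
    · exact le_trans (not_lt.1 hnlt) (key₁ p h)
    · exact key₂ p h
  refine ⟨H1, H2, ⟨ch - wstar, ch + wstar, by ring_nf; linarith, ?_⟩,
    ⟨ct - wstar, ct + wstar, by ring_nf; linarith, ?_⟩⟩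
  · rintro p ⟨hp, hlt'⟩
    have := H1 p hp hlt'
    rw [infDist_line u hu] at this
    rw [abs_sub_le_iff] at this
    exact ⟨by linarith [this.1], by linarith [this.2]⟩
  · rintro p ⟨hp, hnlt⟩
    have := H2 p hp hnlt
    rw [infDist_line v hv] at this
    rw [abs_sub_le_iff] at this
    exact ⟨by linarith [this.1], by linarith [this.2]⟩
end

section
/- Let S be a finite set of points in ℝ² with width(S) > 0, and let w* be the minimum, over pairs of parallel slabs whose union covers S, of the maximum of the two widths. Then w* ≤ width(S)/2. Moreover, if (σ₁*, σ₂*) is an optimal pair attaining w* with gap g = g(Σ*) and total extent W(Σ*) = w(σ₁*)+w(σ₂*)+g, then width(S) ≤ W(Σ*) ≤ g + 2w*. -/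
/-- `w* ≤ width(S)/2`, and for any optimal pair of (interior-disjoint, ordered) parallel
slabs attaining `w*` with gap `g`, we have `width(S) ≤ W(Σ*) ≤ g + 2·w*`. -/
theorem stmt18 (S : Finset (EuclideanSpace ℝ (Fin 2))) (wd wstar : ℝ)
    (hwd : IsLeast {w : ℝ | ∃ (u : EuclideanSpace ℝ (Fin 2)) (a b : ℝ),
      ‖u‖ = 1 ∧ (↑S : Set (EuclideanSpace ℝ (Fin 2))) ⊆ slab u a b ∧ w = b - a} wd)
    (hwdpos : 0 < wd)
    (hws : IsLeast {w : ℝ | ∃ (u : EuclideanSpace ℝ (Fin 2)) (a₁ b₁ a₂ b₂ : ℝ),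
      ‖u‖ = 1 ∧ (↑S : Set (EuclideanSpace ℝ (Fin 2))) ⊆ slab u a₁ b₁ ∪ slab u a₂ b₂ ∧
      w = max (b₁ - a₁) (b₂ - a₂)} wstar) :
    wstar ≤ wd / 2 ∧
    ∀ (u : EuclideanSpace ℝ (Fin 2)) (a₁ b₁ a₂ b₂ : ℝ), ‖u‖ = 1 →
      a₁ ≤ b₁ → b₁ ≤ a₂ → a₂ ≤ b₂ →
      (↑S : Set (EuclideanSpace ℝ (Fin 2))) ⊆ slab u a₁ b₁ ∪ slab u a₂ b₂ →
      max (b₁ - a₁) (b₂ - a₂) = wstar →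
      wd ≤ b₂ - a₁ ∧ b₂ - a₁ ≤ (a₂ - b₁) + 2 * wstar := by
  obtain ⟨⟨u, a, b, hu, hSub, hw⟩, hlb⟩ := hwd
  constructor
  · -- split the minimum slab into two halves
    apply hws.2
    refine ⟨u, a, (a + b) / 2, (a + b) / 2, b, hu, ?_, ?_⟩
    · intro x hx
      have hx' := hSub hx
      rcases le_or_gt (inner ℝ u x : ℝ) ((a + b) / 2) with h | h
      · exact Or.inl ⟨hx'.1, h⟩
      · exact Or.inr ⟨h.le, hx'.2⟩
    · rw [hw]; rw [show (a+b)/2 - a = (b-a)/2 by ring, show b - (a+b)/2 = (b-a)/2 by ring, max_self]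
  · intro v a₁ b₁ a₂ b₂ hv h1 h2 h3 hcov hmax
    constructor
    · apply hlb
      refine ⟨v, a₁, b₂, hv, ?_, rfl⟩
      intro x hx
      rcases hcov hx with h | h
      · exact ⟨h.1, h.2.trans (h2.trans h3)⟩
      · exact ⟨(h1.trans h2).trans h.1, h.2⟩
    · have hb1 : b₁ - a₁ ≤ wstar := hmax ▸ le_max_left _ _
      have hb2 : b₂ - a₂ ≤ wstar := hmax ▸ le_max_right _ _
      linarith
end
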